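/- Let G be a finite directed graph with adjacency matrix N and let X be the set of infinite admissible sequences in G, equipped with the metric d(u, v) = n^{-k} where k is the first index at which u and v differ (for a fixed integer n ≥ 2). If every strongly connected component H of G has spectral radius ρ(H) ≤ 1, then X is countable. -/

import Mathlib

open Matrix Filter Topology
open scoped NNReal ENNReal

namespace CountAdm

variable {k : ℕ}

lemma entry_mul_le (M : Matrix (Fin k) (Fin k) ℕ) (m n : ℕ) (x y z : Fin k) :
    (M ^ m) x y * (M ^ n) y z ≤ (M ^ (m + n)) x z := by
  rw [pow_add, Matrix.mul_apply]
  exact Finset.single_le_sum (f := fun i => (M ^ m) x i * (M ^ n) i z)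
    (fun i _ => Nat.zero_le _) (Finset.mem_univ y)

lemma two_pow_le (M : Matrix (Fin k) (Fin k) ℕ) (L : ℕ) (u : Fin k)
    (h2 : 2 ≤ (M ^ L) u u) : ∀ n : ℕ, 2 ^ n ≤ (M ^ (L * n)) u u := by
  intro n
  induction n with
  | zero => simp [Matrix.one_apply_eq]
  | succ n ih =>
      calc 2 ^ (n + 1) = 2 ^ n * 2 := by ring
      _ ≤ (M ^ (L * n)) u u * (M ^ L) u u := Nat.mul_le_mul ih h2
      _ ≤ (M ^ (L * n + L)) u u := entry_mul_le M _ _ _ _ _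
      _ = (M ^ (L * (n + 1))) u u := by ring_nf

attribute [local instance] Matrix.linftyOpNormedRing Matrix.linftyOpNormedAlgebra

lemma entry_nnnorm_le (A : Matrix (Fin k) (Fin k) ℂ) (u w : Fin k) : ‖A u w‖₊ ≤ ‖A‖₊ := by
  rw [Matrix.linfty_opNNNorm_def]
  exact le_trans
    (Finset.single_le_sum (f := fun j => ‖A u j‖₊) (fun i _ => zero_le) (Finset.mem_univ w))
    (Finset.le_sup (f := fun i => ∑ j, ‖A i j‖₊) (Finset.mem_univ u))

/-- If some diagonal entry of a power of `M` is at least 2, the spectral radius of `M`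
(over `ℂ`) is greater than 1. -/
lemma spec_gt (M : Matrix (Fin k) (Fin k) ℕ) (u : Fin k) (L : ℕ) (hL : 0 < L)
    (h2 : 2 ≤ (M ^ L) u u)
    (h : spectralRadius ℂ ((Nat.castRingHom ℂ).mapMatrix M) ≤ 1) : False := by
  set a : Matrix (Fin k) (Fin k) ℂ := (Nat.castRingHom ℂ).mapMatrix M with ha
  have key : ∀ n : ℕ, ((2 : ℝ≥0∞) ^ n) ≤ (‖a ^ (L * n)‖₊ : ℝ≥0∞) := by
    intro n
    have h1 : (2 : ℕ) ^ n ≤ (M ^ (L * n)) u u := two_pow_le M L u h2 n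
    have he : (a ^ (L * n)) u u = (((M ^ (L * n)) u u : ℕ) : ℂ) := by
      rw [ha, ← map_pow]
      simp [RingHom.mapMatrix_apply, Matrix.map_apply]
    have hnorm : (((M ^ (L * n)) u u : ℕ) : ℝ≥0) ≤ ‖a ^ (L * n)‖₊ := by
      have := entry_nnnorm_le (a ^ (L * n)) u u
      rw [he] at this
      simpa using this
    calc (2 : ℝ≥0∞) ^ n = (((2 : ℕ) ^ n : ℕ) : ℝ≥0∞) := by push_cast; ring
    _ ≤ ((((M ^ (L * n)) u u : ℕ) : ℝ≥0) : ℝ≥0∞) := by exact_mod_cast Nat.cast_le.mpr h1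
    _ ≤ (‖a ^ (L * n)‖₊ : ℝ≥0∞) := by exact_mod_cast hnorm
  have htend := spectrum.pow_nnnorm_pow_one_div_tendsto_nhds_spectralRadius a
  have hsub : Tendsto (fun n : ℕ => (‖a ^ (L * n)‖₊ : ℝ≥0∞) ^ (1 / (L * n : ℕ) : ℝ)) atTop
      (𝓝 (spectralRadius ℂ a)) := by
    exact htend.comp (Filter.tendsto_atTop_atTop.mpr fun b => ⟨b, fun n hn =>
      le_trans hn (Nat.le_mul_of_pos_left n hL)⟩)
  have hlow : (2 : ℝ≥0∞) ^ ((1 : ℝ) / L) ≤ spectralRadius ℂ a := by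
    refine ge_of_tendsto hsub ?_
    filter_upwards [eventually_ge_atTop 1] with n hn
    have hLn : ((L * n : ℕ) : ℝ) ≠ 0 := by positivity
    have hexp : (0 : ℝ) ≤ 1 / (L * n : ℕ) := by positivity
    calc (2 : ℝ≥0∞) ^ ((1 : ℝ) / L)
        = (2 : ℝ≥0∞) ^ ((n : ℝ) * (1 / (L * n : ℕ))) := by
          congr 1
          have hn' : (n : ℝ) ≠ 0 := by positivity
          have hL' : (L : ℝ) ≠ 0 := by positivity
          push_cast
          field_simp
    _ = ((2 : ℝ≥0∞) ^ (n : ℕ)) ^ ((1 : ℝ) / (L * n : ℕ)) := by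
          rw [ENNReal.rpow_mul, ENNReal.rpow_natCast]
    _ ≤ (‖a ^ (L * n)‖₊ : ℝ≥0∞) ^ ((1 : ℝ) / (L * n : ℕ)) :=
          ENNReal.rpow_le_rpow (key n) hexp
  have hgt : (1 : ℝ≥0∞) < (2 : ℝ≥0∞) ^ ((1 : ℝ) / L) := by
    refine ENNReal.one_lt_rpow (by norm_num) ?_
    positivity
  exact absurd (lt_of_lt_of_le hgt (hlow.trans h)) (by simp)

abbrev RR (N : Matrix (Fin k) (Fin k) ℕ) : Fin k → Fin k → Prop :=
  fun a b => Relation.ReflTransGen (fun u v : Fin k => 0 < N u v) a b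

open Classical in
noncomputable def cm (N : Matrix (Fin k) (Fin k) ℕ) (v : Fin k) : Matrix (Fin k) (Fin k) ℕ :=
  Matrix.of fun a b => if (RR N v a ∧ RR N a v) ∧ (RR N v b ∧ RR N b v) then N a b else 0

lemma indicator_eq (N : Matrix (Fin k) (Fin k) ℕ) (v : Fin k) :
    (Matrix.of fun a b : Fin k =>
      Set.indicator {q : Fin k × Fin k | (RR N v q.1 ∧ RR N q.1 v) ∧ (RR N v q.2 ∧ RR N q.2 v)}
        (fun q : Fin k × Fin k => (N q.1 q.2 : ℂ)) (a, b)) =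
    (Nat.castRingHom ℂ).mapMatrix (cm N v) := by
  ext a b
  classical
  simp only [Matrix.of_apply, RingHom.mapMatrix_apply, Matrix.map_apply, cm,
    Set.indicator_apply, Set.mem_setOf_eq, Nat.coe_castRingHom]
  split_ifs <;> simp

lemma path_pos (N : Matrix (Fin k) (Fin k) ℕ) (v w u : Fin k)
    (h : Relation.ReflTransGen (fun a b : Fin k => 0 < N a b) w u)
    (hvw : RR N v w) :
    RR N u v → ∃ a : ℕ, 0 < ((cm N v) ^ a) w u := by
  induction h with
  | refl => exact fun _ => ⟨0, by simp [Matrix.one_apply_eq]⟩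
  | @tail x u hwx hxu ih =>
    intro huv
    have hxv : RR N x v := Relation.ReflTransGen.head hxu huv
    obtain ⟨a, ha⟩ := ih hxv
    refine ⟨a + 1, ?_⟩
    have hvx : RR N v x := hvw.trans hwx
    have hvu : RR N v u := hvx.trans (Relation.ReflTransGen.single hxu)
    have hentry : 0 < cm N v x u := by
      simp only [cm, Matrix.of_apply]
      rw [if_pos ⟨⟨hvx, hxv⟩, ⟨hvu, huv⟩⟩]
      exact hxu
    rw [pow_succ, Matrix.mul_apply]
    exact Finset.sum_pos' (fun i _ => Nat.zero_le _)
      ⟨x, Finset.mem_univ x, Nat.mul_pos ha hentry⟩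

lemma cm_entry_pos (N : Matrix (Fin k) (Fin k) ℕ) (v x y : Fin k)
    (hx : RR N v x ∧ RR N x v) (hy : RR N v y ∧ RR N y v) (e : 0 < N x y) :
    0 < cm N v x y := by
  simp only [cm, Matrix.of_apply]
  rw [if_pos ⟨hx, hy⟩]
  exact e

/-- If a vertex of a strongly connected component has two distinct successors within the
component, then some diagonal entry of a power of the component matrix is at least 2. -/
lemma two_le_diag (N : Matrix (Fin k) (Fin k) ℕ) (v u w w' : Fin k)
    (hu : RR N v u ∧ RR N u v) (hw : RR N v w ∧ RR N w v) (hw' : RR N v w' ∧ RR N w' v)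
    (e : 0 < N u w) (e' : 0 < N u w') (hne : w ≠ w') :
    ∃ L : ℕ, 0 < L ∧ 2 ≤ ((cm N v) ^ L) u u := by
  set P := cm N v with hP
  have hwu : Relation.ReflTransGen (fun a b : Fin k => 0 < N a b) w u := hw.2.trans hu.1
  have hw'u : Relation.ReflTransGen (fun a b : Fin k => 0 < N a b) w' u := hw'.2.trans hu.1
  obtain ⟨a, ha⟩ := path_pos N v w u hwu hw.1 hu.2
  obtain ⟨b, hb⟩ := path_pos N v w' u hw'u hw'.1 hu.2
  have euw : 0 < P u w := cm_entry_pos N v u w hu hw e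
  have euw' : 0 < P u w' := cm_entry_pos N v u w' hu hw' e'
  have A1 : 0 < (P ^ (1 + a)) u u := by
    have := entry_mul_le P 1 a u w u
    rw [pow_one] at this
    exact lt_of_lt_of_le (Nat.mul_pos euw ha) this
  have A2 : 0 < (P ^ (1 + b)) u u := by
    have := entry_mul_le P 1 b u w' u
    rw [pow_one] at this
    exact lt_of_lt_of_le (Nat.mul_pos euw' hb) this
  have B1 : 0 < (P ^ (1 + a + b)) w u := by
    have := entry_mul_le P a (1 + b) w u u
    rw [show a + (1 + b) = 1 + a + b by ring] at this
    exact lt_of_lt_of_le (Nat.mul_pos ha A2) this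
  have B2 : 0 < (P ^ (1 + a + b)) w' u := by
    have := entry_mul_le P b (1 + a) w' u u
    rw [show b + (1 + a) = 1 + a + b by ring] at this
    exact lt_of_lt_of_le (Nat.mul_pos hb A1) this
  refine ⟨2 + a + b, by omega, ?_⟩
  have hsum : P u w * (P ^ (1 + a + b)) w u + P u w' * (P ^ (1 + a + b)) w' u ≤
      ∑ y, P u y * (P ^ (1 + a + b)) y u := by
    rw [← Finset.sum_pair (f := fun y => P u y * (P ^ (1 + a + b)) y u) hne]
    exact Finset.sum_le_sum_of_subset (Finset.subset_univ _)
  have heq : (P ^ (2 + a + b)) u u = ∑ y, P u y * (P ^ (1 + a + b)) y u := by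
    rw [show 2 + a + b = 1 + (1 + a + b) by ring, pow_add, pow_one, Matrix.mul_apply]
  have h1 : 0 < P u w * (P ^ (1 + a + b)) w u := Nat.mul_pos euw B1
  have h2 : 0 < P u w' * (P ^ (1 + a + b)) w' u := Nat.mul_pos euw' B2
  omega

/-- Uniqueness of the successor within a strongly connected component, assuming the
spectral radius of the component matrix is at most 1. -/
lemma unique_succ (N : Matrix (Fin k) (Fin k) ℕ)
    (hspec : ∀ v : Fin k, spectralRadius ℂ ((Nat.castRingHom ℂ).mapMatrix (cm N v)) ≤ 1)
    (v u w w' : Fin k)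
    (hu : RR N v u ∧ RR N u v) (hw : RR N v w ∧ RR N w v) (hw' : RR N v w' ∧ RR N w' v)
    (e : 0 < N u w) (e' : 0 < N u w') : w = w' := by
  by_contra hne
  obtain ⟨L, hL, h2⟩ := two_le_diag N v u w w' hu hw hw' e e' hne
  exact spec_gt (cm N v) u L hL h2 (hspec v)

end CountAdm

/-- Let `G` be a finite directed graph with adjacency matrix `N`, and let `X` be the set of
infinite admissible sequences in `G`. If every strongly connected component of `G` has
spectral radius at most `1` (for the adjacency matrix restricted to the component, extended
by zero), then `X` is countable. -/
theorem countable_admissible_sequences_of_components_spectralRadius_le_one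
    (k : ℕ) (N : Matrix (Fin k) (Fin k) ℕ)
    (R : Fin k → Fin k → Prop)
    (hR : R = fun a b => Relation.ReflTransGen (fun u v : Fin k => 0 < N u v) a b)
    (hcomp : ∀ v : Fin k,
      spectralRadius ℂ
        (Matrix.of fun a b : Fin k =>
          Set.indicator {q : Fin k × Fin k | (R v q.1 ∧ R q.1 v) ∧ (R v q.2 ∧ R q.2 v)}
            (fun q : Fin k × Fin k => (N q.1 q.2 : ℂ)) (a, b)) ≤ 1) :
    {f : ℕ → Fin k | ∀ m : ℕ, 0 < N (f m) (f (m + 1))}.Countable := by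
  classical
  subst hR
  have hspec : ∀ v : Fin k,
      spectralRadius ℂ ((Nat.castRingHom ℂ).mapMatrix (CountAdm.cm N v)) ≤ 1 := by
    intro v
    rw [← CountAdm.indicator_eq N v]
    exact hcomp v
  -- reachability along an admissible sequence
  have hreach : ∀ f : ℕ → Fin k, (∀ m, 0 < N (f m) (f (m + 1))) →
      ∀ i j, i ≤ j → CountAdm.RR N (f i) (f j) := by
    intro f hf i j hij
    induction j, hij using Nat.le_induction with
    | base => exact Relation.ReflTransGen.refl
    | succ j hij ih => exact ih.tail (hf j)
  -- the covering family
  refine Set.Countable.mono ?_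
    (Set.countable_iUnion fun m₀ : ℕ => Set.countable_iUnion fun l : List (Fin k) =>
      Set.Subsingleton.countable (s := {f : ℕ → Fin k |
        (∀ m, 0 < N (f m) (f (m + 1))) ∧
        (∀ m, m₀ ≤ m → CountAdm.RR N (f m) (f m₀)) ∧
        List.ofFn (fun i : Fin (m₀ + 1) => f i) = l}) ?_)
  · -- covering
    intro f hf
    have hfadm : ∀ m, 0 < N (f m) (f (m + 1)) := hf
    obtain ⟨m₀, hm₀⟩ : ∃ m₀, ∀ m, m₀ ≤ m → CountAdm.RR N (f m) (f m₀) := by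
      set g : ℕ → ℕ := fun m => Set.ncard {u | CountAdm.RR N (f m) u} with hg
      have hne : (Set.range g).Nonempty := ⟨g 0, ⟨0, rfl⟩⟩
      obtain ⟨m₀, hm₀⟩ := Nat.sInf_mem hne
      refine ⟨m₀, fun m hm => ?_⟩
      have hsub : {u | CountAdm.RR N (f m) u} ⊆ {u | CountAdm.RR N (f m₀) u} := by
        intro u hu
        exact (hreach f hfadm m₀ m hm).trans hu
      have hcard : g m₀ ≤ g m := hm₀ ▸ Nat.sInf_le ⟨m, rfl⟩
      have hseteq : {u | CountAdm.RR N (f m) u} = {u | CountAdm.RR N (f m₀) u} :=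
        Set.eq_of_subset_of_ncard_le hsub hcard (Set.toFinite _)
      have : f m₀ ∈ {u | CountAdm.RR N (f m) u} := by
        rw [hseteq]
        exact Relation.ReflTransGen.refl
      exact this
    exact Set.mem_iUnion.mpr ⟨m₀, Set.mem_iUnion.mpr
      ⟨List.ofFn (fun i : Fin (m₀ + 1) => f i), ⟨hfadm, hm₀, rfl⟩⟩⟩
  · -- subsingleton
    rintro f ⟨hfadm, hfΦ, hfl⟩ g ⟨hgadm, hgΦ, hgl⟩
    have hpre : ∀ i : Fin (m₀ + 1), f i = g i := by
      have := List.ofFn_injective (hfl.trans hgl.symm)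
      exact fun i => congrFun this i
    have h0 : f m₀ = g m₀ := hpre ⟨m₀, Nat.lt_succ_self _⟩
    have hkey : ∀ m, m₀ ≤ m → f m = g m := by
      intro m hm
      induction m, hm using Nat.le_induction with
      | base => exact h0
      | succ m hm ih =>
        refine CountAdm.unique_succ N hspec (f m₀) (f m) (f (m + 1)) (g (m + 1))
          ⟨hreach f hfadm m₀ m hm, hfΦ m hm⟩
          ⟨hreach f hfadm m₀ (m + 1) (by omega), hfΦ (m + 1) (by omega)⟩
          ⟨?_, ?_⟩ (hfadm m) ?_
        · rw [h0]
          exact hreach g hgadm m₀ (m + 1) (by omega)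
        · rw [h0]
          exact hgΦ (m + 1) (by omega)
        · rw [ih]
          exact hgadm m
    funext m
    rcases le_or_gt m m₀ with h | h
    · exact hpre ⟨m, by omega⟩
    · exact hkey m (by omega)
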